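/- Weighted product-sum bound: let q ∈ (0,1), p ≥ q, let a, b be integers with 2 ≤ a ≤ b, and let α > 0 satisfy α ≤ a^q (so that 1 − α·τ^{-q} ∈ [0,1] for all τ ≥ a). Then ∑_{t=a}^{b} t^{-p}·∏_{τ=a}^{t} (1 − α·τ^{-q}) ≤ ((a−1)^{q−p}/α)·exp( (α/(1−q))·(a^{1−q} − (a−1)^{1−q}) ). -/

import Mathlib

/-- **Weighted product-sum bound.** For `q ∈ (0,1)`, `p ≥ q`, integers `2 ≤ a ≤ b`
and `0 < α ≤ a^q`,
`∑_{t=a}^b t^{-p}·∏_{τ=a}^t (1 − α·τ^{-q})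
  ≤ ((a−1)^{q−p}/α)·exp((α/(1−q))·(a^{1−q} − (a−1)^{1−q}))`. -/
theorem weighted_product_sum_bound (q p : ℝ) (hq0 : 0 < q) (hq1 : q < 1) (hpq : q ≤ p)
    (a b : ℕ) (ha : 2 ≤ a) (hab : a ≤ b)
    (α : ℝ) (hα : 0 < α) (hαa : α ≤ (a : ℝ) ^ q) :
    ∑ t ∈ Finset.Icc a b, (t : ℝ) ^ (-p) * ∏ τ ∈ Finset.Icc a t, (1 - α * (τ : ℝ) ^ (-q))
      ≤ (((a : ℝ) - 1) ^ (q - p) / α) *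
          Real.exp ((α / (1 - q)) * ((a : ℝ) ^ (1 - q) - ((a : ℝ) - 1) ^ (1 - q))) := by
  have ha1 : (1 : ℝ) ≤ (a : ℝ) - 1 := by
    have : (2 : ℝ) ≤ (a : ℝ) := by exact_mod_cast ha
    linarith
  have ha0 : (0 : ℝ) < (a : ℝ) := by linarith
  -- factor bounds
  have hfac : ∀ τ : ℕ, a ≤ τ → 0 ≤ α * (τ : ℝ) ^ (-q) ∧ α * (τ : ℝ) ^ (-q) ≤ 1 := by
    intro τ hτ
    have hτ0 : (0 : ℝ) < (τ : ℝ) := lt_of_lt_of_le ha0 (by exact_mod_cast hτ)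
    have hτq : (0 : ℝ) < (τ : ℝ) ^ q := Real.rpow_pos_of_pos hτ0 q
    constructor
    · positivity
    · have haτ : (a : ℝ) ^ q ≤ (τ : ℝ) ^ q :=
        Real.rpow_le_rpow ha0.le (by exact_mod_cast hτ) hq0.le
      have : α * (τ : ℝ) ^ (-q) ≤ (τ : ℝ) ^ q * (τ : ℝ) ^ (-q) := by
        apply mul_le_mul_of_nonneg_right (le_trans hαa haτ)
        positivity
      rwa [← Real.rpow_add hτ0, add_neg_cancel, Real.rpow_zero] at this
  set P : ℕ → ℝ := fun t => ∏ τ ∈ Finset.Icc a t, (1 - α * (τ : ℝ) ^ (-q)) with hP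
  have hPnonneg : ∀ t : ℕ, 0 ≤ P t := by
    intro t
    apply Finset.prod_nonneg
    intro τ hτ
    have := (hfac τ (Finset.mem_Icc.mp hτ).1).2
    linarith
  -- key telescoping bound
  have key : ∀ c : ℕ, a ≤ c →
      (∑ t ∈ Finset.Icc a c, α * (t : ℝ) ^ (-q) * P t) + P c ≤ 1 := by
    intro c hc
    induction c, hc using Nat.le_induction with
    | base =>
      rw [Finset.Icc_self, Finset.sum_singleton]
      have hPa : P a = 1 - α * (a : ℝ) ^ (-q) := by
        simp [hP, Finset.Icc_self]
      obtain ⟨h0, h1⟩ := hfac a le_rfl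
      rw [hPa]; nlinarith
    | succ n hn ih =>
      have hmem : n + 1 ∉ Finset.Icc a n := by simp
      rw [Finset.sum_Icc_succ_top (by omega : a ≤ n + 1)]
      have hPsucc : P (n + 1) = P n * (1 - α * ((n + 1 : ℕ) : ℝ) ^ (-q)) := by
        simp only [hP]
        rw [Finset.prod_Icc_succ_top (by omega)]
      obtain ⟨h0, h1⟩ := hfac (n + 1) (by omega)
      have hPn := hPnonneg n
      rw [hPsucc]
      nlinarith [ih, mul_nonneg hPn (mul_self_nonneg (α * ((n + 1 : ℕ) : ℝ) ^ (-q)))]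
  have hkey := key b hab
  have hPb := hPnonneg b
  have hsum : ∑ t ∈ Finset.Icc a b, α * (t : ℝ) ^ (-q) * P t ≤ 1 := by linarith
  -- termwise bound: t^{-p} ≤ (a-1)^{q-p} * t^{-q}
  have hterm : ∀ t ∈ Finset.Icc a b,
      (t : ℝ) ^ (-p) * P t ≤ (((a : ℝ) - 1) ^ (q - p) / α) * (α * (t : ℝ) ^ (-q) * P t) := by
    intro t ht
    have hta : a ≤ t := (Finset.mem_Icc.mp ht).1
    have ht0 : (0 : ℝ) < (t : ℝ) := lt_of_lt_of_le ha0 (by exact_mod_cast hta)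
    have h1 : (t : ℝ) ^ (-p) = (t : ℝ) ^ (q - p) * (t : ℝ) ^ (-q) := by
      rw [← Real.rpow_add ht0]; ring_nf
    have h2 : (t : ℝ) ^ (q - p) ≤ ((a : ℝ) - 1) ^ (q - p) := by
      apply Real.rpow_le_rpow_of_nonpos (by linarith) (by
        have : (a : ℝ) ≤ (t : ℝ) := by exact_mod_cast hta
        linarith) (by linarith)
    have h3 : (0 : ℝ) ≤ (t : ℝ) ^ (-q) * P t := by
      have := hPnonneg t; positivity
    calc (t : ℝ) ^ (-p) * P t = (t : ℝ) ^ (q - p) * ((t : ℝ) ^ (-q) * P t) := by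
          rw [h1]; ring
      _ ≤ ((a : ℝ) - 1) ^ (q - p) * ((t : ℝ) ^ (-q) * P t) :=
          mul_le_mul_of_nonneg_right h2 h3
      _ = (((a : ℝ) - 1) ^ (q - p) / α) * (α * (t : ℝ) ^ (-q) * P t) := by
          field_simp
  have hC : (0 : ℝ) ≤ ((a : ℝ) - 1) ^ (q - p) / α := by positivity
  have hmain : ∑ t ∈ Finset.Icc a b, (t : ℝ) ^ (-p) * P t
      ≤ ((a : ℝ) - 1) ^ (q - p) / α := by
    calc ∑ t ∈ Finset.Icc a b, (t : ℝ) ^ (-p) * P t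
        ≤ ∑ t ∈ Finset.Icc a b, (((a : ℝ) - 1) ^ (q - p) / α) * (α * (t : ℝ) ^ (-q) * P t) :=
          Finset.sum_le_sum hterm
      _ = (((a : ℝ) - 1) ^ (q - p) / α) * ∑ t ∈ Finset.Icc a b, α * (t : ℝ) ^ (-q) * P t := by
          rw [Finset.mul_sum]
      _ ≤ (((a : ℝ) - 1) ^ (q - p) / α) * 1 := mul_le_mul_of_nonneg_left hsum hC
      _ = ((a : ℝ) - 1) ^ (q - p) / α := mul_one _
  -- exp factor ≥ 1
  have hexp : 1 ≤ Real.exp ((α / (1 - q)) * ((a : ℝ) ^ (1 - q) - ((a : ℝ) - 1) ^ (1 - q))) := by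
    apply Real.one_le_exp
    have h1 : ((a : ℝ) - 1) ^ (1 - q) ≤ (a : ℝ) ^ (1 - q) :=
      Real.rpow_le_rpow (by linarith) (by linarith) (by linarith)
    have h2 : (0 : ℝ) ≤ α / (1 - q) := div_nonneg hα.le (by linarith)
    nlinarith
  calc ∑ t ∈ Finset.Icc a b, (t : ℝ) ^ (-p) * P t
      ≤ ((a : ℝ) - 1) ^ (q - p) / α := hmain
    _ = (((a : ℝ) - 1) ^ (q - p) / α) * 1 := (mul_one _).symm
    _ ≤ _ := mul_le_mul_of_nonneg_left hexp hC
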